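/- Under the hypotheses of the previous setup (x_0 = x_1 = 1, x_{n+2} x_n = x_{n+1}^{d_1} G(x_{n+1}) with d_1 ≥ 3, G ∈ ℤ_{≥0}[x], G(0) ≠ 0, G(1) ≥ 3), the ratios z_n = x_n / x_{n-1}^2 satisfy z_n ≥ 3 for all n ≥ 2. -/

import Mathlib

theorem stmt10 (d1 : ℕ) (hd1 : 3 ≤ d1) (G : Polynomial ℤ)
    (hGcoeff : ∀ i, 0 ≤ G.coeff i) (hG0 : G.eval 0 ≠ 0) (hG1 : 3 ≤ G.eval 1)
    (x : ℕ → ℚ) (hx0 : x 0 = 1) (hx1 : x 1 = 1)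
    (hrec : ∀ n, x (n + 2) * x n
      = x (n + 1) ^ d1 * (G.map (Int.castRingHom ℚ)).eval (x (n + 1)))
    (z : ℕ → ℚ) (hz : ∀ n, 2 ≤ n → z n = x n / x (n - 1) ^ 2) :
    ∀ n, 2 ≤ n → 3 ≤ z n := by
  set H := G.map (Int.castRingHom ℚ) with hH
  have hHcoeff : ∀ i, (0:ℚ) ≤ H.coeff i := by
    intro i
    rw [hH, Polynomial.coeff_map]
    simp only [eq_intCast]; exact_mod_cast hGcoeff i
  have hG : ∀ q : ℚ, 1 ≤ q → (3:ℚ) ≤ H.eval q := by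
    intro q hq
    have h1 : H.eval 1 = ((G.eval 1 : ℤ) : ℚ) := by
      rw [hH, Polynomial.eval_one_map]; rfl
    have h3 : (3:ℚ) ≤ H.eval 1 := by rw [h1]; exact_mod_cast hG1
    refine h3.trans ?_
    rw [Polynomial.eval_eq_sum_range, Polynomial.eval_eq_sum_range]
    apply Finset.sum_le_sum
    intro i _
    have := hHcoeff i
    have hq' : (1:ℚ)^i ≤ q^i := by
      apply pow_le_pow_left₀ (by norm_num) hq
    nlinarith [hq']
  -- main induction: 1 ≤ x n and x n ≤ x (n+1)
  have key : ∀ n, 1 ≤ x n ∧ x n ≤ x (n + 1) := by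
    intro n
    induction n with
    | zero => constructor <;> simp [hx0, hx1]
    | succ n ih =>
      obtain ⟨h1, h2⟩ := ih
      have h1' : 1 ≤ x (n + 1) := h1.trans h2
      refine ⟨h1', ?_⟩
      have hxn : 0 < x n := lt_of_lt_of_le one_pos h1
      have hGe : (3:ℚ) ≤ H.eval (x (n + 1)) := hG _ h1'
      have hpow : x (n + 1) ^ 2 ≤ x (n + 1) ^ d1 :=
        pow_le_pow_right₀ h1' (by omega)
      have hrn := hrec n
      rw [← mul_le_mul_iff_of_pos_right hxn]
      rw [hrn]
      have : x (n + 1) * x n ≤ x (n + 1) ^ 2 := by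
        rw [sq]
        exact mul_le_mul_of_nonneg_left h2 (by linarith)
      have hd1pos : (0:ℚ) ≤ x (n+1) ^ d1 := by positivity
      nlinarith
  intro n hn
  obtain ⟨m, rfl⟩ : ∃ m, n = m + 2 := ⟨n - 2, by omega⟩
  rw [hz _ hn]
  have h1 := (key m).1
  have h2 := (key m).2
  have h1' : 1 ≤ x (m + 1) := h1.trans h2
  have hxn : 0 < x m := lt_of_lt_of_le one_pos h1
  have hGe : (3:ℚ) ≤ H.eval (x (m + 1)) := hG _ h1'
  have hpow : x (m + 1) ^ 3 ≤ x (m + 1) ^ d1 := pow_le_pow_right₀ h1' hd1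
  have hrn := hrec m
  have hsq : (0:ℚ) < x (m + 1) ^ 2 := by positivity
  have hkey : 3 * x (m + 1) ^ 2 ≤ x (m + 2) := by
    rw [← mul_le_mul_iff_of_pos_right hxn, hrn]
    nlinarith [pow_pos (lt_of_lt_of_le one_pos h1') 3]
  have : (m + 2 - 1) = m + 1 := by omega
  rw [this, le_div_iff₀ hsq]
  linarith
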